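/- For the unitary qubit evolution dρ/dt = −i[H, ρ] with H = ω σ_x and ω ≠ 0, the induced 6×6 generator 𝕄 on the tomographic probability vector P (with μ = π_y/π_z) has the block form with nonzero off-diagonal blocks coupling the y- and z-components, given by 𝕄 P where dp₁^{(y)}/dt = −2ωμ p₁^{(z)} + 2ωμ p₂^{(z)}, dp₂^{(y)}/dt = 2ωμ p₁^{(z)} − 2ωμ p₂^{(z)}, dp₁^{(z)}/dt = ω μ^{-1}(p₁^{(y)} − p₂^{(y)}), dp₂^{(z)}/dt = −ω μ^{-1}(p₁^{(y)} − p₂^{(y)}), and the x-components constant. This 𝕄 has a strictly negative off-diagonal entry, hence does not satisfy the Kolmogorov conditions. -/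

import Mathlib

open Matrix

/-- Kolmogorov conditions for a generator. -/
def IsKolmogorov {n : ℕ} (M : Matrix (Fin n) (Fin n) ℝ) : Prop :=
  (∀ i j, i ≠ j → 0 ≤ M i j) ∧ ∀ j, ∑ i, M i j = 0

/-- The 6×6 tomographic generator induced by the unitary evolution with `H = ω σx`,
with coordinates ordered as `(p₁ˣ, p₂ˣ, p₁ʸ, p₂ʸ, p₁ᶻ, p₂ᶻ)` and `μ = πy/πz`. -/
noncomputable def genUnitary (ω μ : ℝ) : Matrix (Fin 6) (Fin 6) ℝ :=
  !![0, 0, 0, 0, 0, 0;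
     0, 0, 0, 0, 0, 0;
     0, 0, 0, 0, -2 * ω * μ, 2 * ω * μ;
     0, 0, 0, 0, 2 * ω * μ, -2 * ω * μ;
     0, 0, ω / μ, -(ω / μ), 0, 0;
     0, 0, -(ω / μ), ω / μ, 0, 0]

theorem unitary_generator_not_kolmogorov (ω πy πz : ℝ) (hω : ω ≠ 0)
    (hπy : 0 < πy) (hπz : 0 < πz) :
    (∃ i j, i ≠ j ∧ genUnitary ω (πy / πz) i j < 0) ∧
    ¬ IsKolmogorov (genUnitary ω (πy / πz)) := by
  have hμ : 0 < πy / πz := div_pos hπy hπz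
  have key : ∃ i j, i ≠ j ∧ genUnitary ω (πy / πz) i j < 0 := by
    rcases hω.lt_or_gt with h | h
    · exact ⟨3, 4, by decide, by simp [genUnitary]; nlinarith⟩
    · exact ⟨2, 4, by decide, by simp [genUnitary]; nlinarith⟩
  refine ⟨key, fun hK => ?_⟩
  obtain ⟨i, j, hij, hlt⟩ := key
  exact absurd (hK.1 i j hij) (not_le.mpr hlt)
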